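/- Let S be a bounded idempotent linear operator on a Hilbert space H (S² = S, an oblique projection), so that R(S) and R(S*) are closed. Then ‖P_{R(S)} − P_{R(S*)}‖ = ‖P_{R(S)} P_{N(S)}‖ = ‖P_{N(S)} P_{R(S)}‖, and this common value equals √(1 − ‖S‖⁻²) when S ≠ 0, and equals 0 when S = 0. -/

import Mathlib

open Filter Topology Metric Submodule ContinuousLinearMap

/-- Orthogonal projection onto a subspace `K` (as an operator `H →L[ℝ] H`),
defined whenever `K` admits orthogonal projections (e.g. `K` closed). -/
noncomputable def orthProj {H : Type*} [NormedAddCommGroup H] [InnerProductSpace ℝ H]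
    (K : Submodule ℝ H) : H →L[ℝ] H :=
  open scoped Classical in
  if h : HasOrthogonalProjection K then
    haveI := h
    K.subtypeL.comp (orthogonalProjection K)
  else 0

section aux
variable {H : Type*} [NormedAddCommGroup H] [InnerProductSpace ℝ H]

local notation "⟪" x ", " y "⟫" => @inner ℝ _ _ x y

lemma orthProj_of_has (K : Submodule ℝ H) [h : HasOrthogonalProjection K] :
    orthProj K = K.subtypeL.comp (orthogonalProjection K) := by
  simp [orthProj, h]

lemma orthProj_apply (K : Submodule ℝ H) [HasOrthogonalProjection K] (x : H) :
    orthProj K x = orthogonalProjection K x := by rw [orthProj_of_has]; rfl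

lemma orthProj_mem (K : Submodule ℝ H) [HasOrthogonalProjection K] (x : H) :
    orthProj K x ∈ K := by rw [orthProj_apply]; exact (orthogonalProjection K x).2

lemma orthProj_eq_self (K : Submodule ℝ H) [HasOrthogonalProjection K] {x : H} (hx : x ∈ K) :
    orthProj K x = x := by rw [orthProj_apply]; exact starProjection_eq_self_iff.mpr hx

lemma orthProj_idem (K : Submodule ℝ H) [HasOrthogonalProjection K] (x : H) :
    orthProj K (orthProj K x) = orthProj K x :=
  orthProj_eq_self K (orthProj_mem K x)

lemma norm_orthProj_le (K : Submodule ℝ H) [HasOrthogonalProjection K] (x : H) :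
    ‖orthProj K x‖ ≤ ‖x‖ := by
  calc ‖orthProj K x‖ ≤ ‖orthProj K‖ * ‖x‖ := (orthProj K).le_opNorm x
  _ ≤ 1 * ‖x‖ := by
      apply mul_le_mul_of_nonneg_right _ (norm_nonneg x)
      rw [orthProj_of_has]; exact orthogonalProjection_norm_le K
  _ = ‖x‖ := one_mul _

lemma orthProj_inner (K : Submodule ℝ H) [HasOrthogonalProjection K] (x y : H) :
    ⟪orthProj K x, y⟫ = ⟪x, orthProj K y⟫ := by
  simp only [orthProj_apply]
  exact inner_starProjection_left_eq_right K x y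

lemma inner_orthProj_self (K : Submodule ℝ H) [HasOrthogonalProjection K] (x : H) :
    ⟪orthProj K x, x⟫ = ‖orthProj K x‖ ^ 2 := by
  have := orthProj_inner K x (orthProj K x)
  rw [orthProj_idem] at this
  rw [real_inner_comm x (orthProj K x), ← this, real_inner_self_eq_norm_sq]

lemma orthProj_orthogonal (K : Submodule ℝ H) [HasOrthogonalProjection K] (x : H) :
    orthProj Kᗮ x = x - orthProj K x := by
  rw [orthProj_apply, orthProj_apply]; exact starProjection_orthogonal_val (K := K) x

end aux

section idem
variable {H : Type*} [NormedAddCommGroup H] [InnerProductSpace ℝ H] [CompleteSpace H]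

local notation "⟪" x ", " y "⟫" => @inner ℝ _ _ x y

lemma apply_eq_self_of_mem_range (S : H →L[ℝ] H) (hS : S.comp S = S) {x : H}
    (hx : x ∈ LinearMap.range (S : H →ₗ[ℝ] H)) : S x = x := by
  obtain ⟨y, rfl⟩ := hx
  calc S (S y) = (S.comp S) y := rfl
  _ = S y := by rw [hS]

lemma isClosed_range_idem (S : H →L[ℝ] H) (hS : S.comp S = S) :
    IsClosed ((LinearMap.range (S : H →ₗ[ℝ] H) : Submodule ℝ H) : Set H) := by
  have : (LinearMap.range (S : H →ₗ[ℝ] H) : Submodule ℝ H) = LinearMap.ker ((1 - S : H →L[ℝ] H) : H →ₗ[ℝ] H) := by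
    ext x
    simp only [LinearMap.mem_range, LinearMap.mem_ker, ContinuousLinearMap.coe_coe, ContinuousLinearMap.coe_sub',
      Pi.sub_apply, ContinuousLinearMap.one_apply, sub_eq_zero]
    constructor
    · rintro ⟨y, rfl⟩
      exact (apply_eq_self_of_mem_range S hS ⟨y, rfl⟩).symm
    · intro h; exact ⟨x, h.symm⟩
  rw [this]
  exact isClosed_ker (1 - S)

lemma hasOrthProj_range (S : H →L[ℝ] H) (hS : S.comp S = S) :
    HasOrthogonalProjection (LinearMap.range (S : H →ₗ[ℝ] H)) := by
  have := (isClosed_range_idem S hS).completeSpace_coe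
  infer_instance

instance hasOrthProj_ker (S : H →L[ℝ] H) : HasOrthogonalProjection (LinearMap.ker (S : H →ₗ[ℝ] H)) := by
  have := (isClosed_ker S).completeSpace_coe
  infer_instance

lemma ker_eq_orthogonal_range_adjoint (S : H →L[ℝ] H) :
    LinearMap.ker (S : H →ₗ[ℝ] H) = (LinearMap.range (ContinuousLinearMap.adjoint S : H →ₗ[ℝ] H))ᗮ := by
  ext x
  simp only [LinearMap.mem_ker, Submodule.mem_orthogonal, LinearMap.mem_range, ContinuousLinearMap.coe_coe]
  constructor
  · rintro h u ⟨y, rfl⟩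
    rw [adjoint_inner_left, h, inner_zero_right]
  · intro h
    rw [← @inner_self_eq_zero ℝ]
    have := h (ContinuousLinearMap.adjoint S (S x)) ⟨S x, rfl⟩
    rwa [adjoint_inner_left] at this

lemma adjoint_idem (S : H →L[ℝ] H) (hS : S.comp S = S) :
    (ContinuousLinearMap.adjoint S).comp (ContinuousLinearMap.adjoint S)
      = ContinuousLinearMap.adjoint S := by
  rw [← adjoint_comp, hS]

lemma norm_adjoint (S : H →L[ℝ] H) : ‖ContinuousLinearMap.adjoint S‖ = ‖S‖ :=
  ContinuousLinearMap.adjoint.norm_map S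

end idem

section key
variable {H : Type*} [NormedAddCommGroup H] [InnerProductSpace ℝ H] [CompleteSpace H]

local notation "⟪" x ", " y "⟫" => @inner ℝ _ _ x y

set_option linter.unusedSectionVars false

lemma key (S : H →L[ℝ] H) (hS : S.comp S = S) (hne : S ≠ 0) :
    ‖(orthProj (LinearMap.ker (S : H →ₗ[ℝ] H))).comp (orthProj (LinearMap.range (S : H →ₗ[ℝ] H)))‖
      = Real.sqrt (1 - (‖S‖ ^ 2)⁻¹) := by
  haveI := hasOrthProj_range S hS
  set R := LinearMap.range (S : H →ₗ[ℝ] H) with hR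
  set N := LinearMap.ker (S : H →ₗ[ℝ] H) with hN
  set P := orthProj R with hP
  set Q := orthProj N with hQ
  set c := ‖Q.comp P‖ with hc
  have hSpos : 0 < ‖S‖ := norm_pos_iff.mpr hne
  have hS1 : 1 ≤ ‖S‖ := by
    have h := S.opNorm_comp_le S
    rw [hS] at h
    nlinarith
  have hS2pos : (0:ℝ) < ‖S‖ ^ 2 := by positivity
  have hinv : (‖S‖ ^ 2)⁻¹ * ‖S‖ ^ 2 = 1 := inv_mul_cancel₀ (ne_of_gt hS2pos)
  have hinvle : (‖S‖ ^ 2)⁻¹ ≤ 1 := by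
    rw [inv_le_one_iff₀]; right; nlinarith
  -- Step 1: for r in the range, ‖r‖² ≤ ‖S‖² (‖r‖² - ‖Q r‖²)
  have step1 : ∀ r ∈ R, ‖r‖ ^ 2 ≤ ‖S‖ ^ 2 * (‖r‖ ^ 2 - ‖Q r‖ ^ 2) := by
    intro r hr
    have hQr : Q r ∈ N := orthProj_mem N r
    have hQr0 : S (Q r) = 0 := LinearMap.mem_ker.mp hQr
    have hSx : S (r - Q r) = r := by
      rw [map_sub, apply_eq_self_of_mem_range S hS hr, hQr0, sub_zero]
    have hinner : ⟪r, Q r⟫ = ‖Q r‖ ^ 2 := by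
      rw [real_inner_comm]; exact inner_orthProj_self N r
    have hx : ‖r - Q r‖ ^ 2 = ‖r‖ ^ 2 - ‖Q r‖ ^ 2 := by
      rw [@norm_sub_sq_real, hinner]; ring
    have hle := S.le_opNorm (r - Q r)
    rw [hSx] at hle
    nlinarith [norm_nonneg (r - Q r), norm_nonneg r]
  have hQP_le : ∀ y : H, ‖Q (P y)‖ ^ 2 ≤ (1 - (‖S‖ ^ 2)⁻¹) * ‖y‖ ^ 2 := by
    intro y
    have h1 := step1 (P y) (orthProj_mem R y)
    have h2 : ‖P y‖ ≤ ‖y‖ := norm_orthProj_le R y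
    have h2' : (0:ℝ) ≤ ‖P y‖ := norm_nonneg _
    have h2'' : (0:ℝ) ≤ ‖y‖ := norm_nonneg _
    have e : ‖S‖ ^ 2 * ((1 - (‖S‖ ^ 2)⁻¹) * ‖y‖ ^ 2) = (‖S‖ ^ 2 - 1) * ‖y‖ ^ 2 := by
      field_simp
    have hgoal : ‖S‖ ^ 2 * ‖Q (P y)‖ ^ 2 ≤ ‖S‖ ^ 2 * ((1 - (‖S‖ ^ 2)⁻¹) * ‖y‖ ^ 2) := by
      rw [e]
      nlinarith [mul_nonneg (by nlinarith : (0:ℝ) ≤ ‖S‖ ^ 2 - 1)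
        (by nlinarith : (0:ℝ) ≤ ‖y‖ ^ 2 - ‖P y‖ ^ 2)]
    exact le_of_mul_le_mul_left hgoal hS2pos
  have hcle : c ≤ Real.sqrt (1 - (‖S‖ ^ 2)⁻¹) := by
    apply opNorm_le_bound _ (Real.sqrt_nonneg _)
    intro y
    have h := Real.sqrt_le_sqrt (hQP_le y)
    rw [Real.sqrt_sq (norm_nonneg _), Real.sqrt_mul (by linarith) (‖y‖ ^ 2),
      Real.sqrt_sq (norm_nonneg _)] at h
    exact h
  have hc0 : 0 ≤ c := norm_nonneg _
  have hc2le : c ^ 2 ≤ 1 - (‖S‖ ^ 2)⁻¹ := by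
    have := pow_le_pow_left₀ hc0 hcle 2
    rwa [Real.sq_sqrt (by linarith)] at this
  set d := 1 - c ^ 2 with hd
  have hdpos : 0 < d := by
    have : (0:ℝ) < (‖S‖ ^ 2)⁻¹ := by positivity
    simp only [hd]; nlinarith
  -- Step 2: (1 - c²) ‖S x‖² ≤ ‖x‖²
  have step2 : ∀ x : H, d * ‖S x‖ ^ 2 ≤ ‖x‖ ^ 2 := by
    intro x
    set r := S x with hr'
    set n := x - S x with hn'
    have hrR : r ∈ R := ⟨x, rfl⟩
    have hnN : n ∈ N := by
      simp only [hN, LinearMap.mem_ker, ContinuousLinearMap.coe_coe, hn', map_sub]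
      have : S (S x) = S x := by
        calc S (S x) = (S.comp S) x := rfl
        _ = S x := by rw [hS]
      rw [this, sub_self]
    have hxn : x = r + n := by simp [hr', hn']
    have hinner : ⟪r, n⟫ = ⟪Q (P r), n⟫ := by
      have h1 : n = Q n := (orthProj_eq_self N hnN).symm
      have h2 : r = P r := (orthProj_eq_self R hrR).symm
      calc ⟪r, n⟫ = ⟪r, Q n⟫ := by rw [← h1]
      _ = ⟪Q r, n⟫ := (orthProj_inner N r n).symm
      _ = ⟪Q (P r), n⟫ := by rw [← h2]
    have habs : |⟪r, n⟫| ≤ c * ‖r‖ * ‖n‖ := by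
      rw [hinner]
      calc |⟪Q (P r), n⟫| ≤ ‖Q (P r)‖ * ‖n‖ := abs_real_inner_le_norm _ _
      _ ≤ (c * ‖r‖) * ‖n‖ := by
          apply mul_le_mul_of_nonneg_right _ (norm_nonneg n)
          exact (Q.comp P).le_opNorm r
      _ = c * ‖r‖ * ‖n‖ := by ring
    have hnorm : ‖x‖ ^ 2 = ‖r‖ ^ 2 + 2 * ⟪r, n⟫ + ‖n‖ ^ 2 := by
      rw [hxn, @norm_add_sq_real]
    have habs' := abs_le.mp habs
    nlinarith [sq_nonneg (c * ‖r‖ - ‖n‖), habs'.1]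
  have hSle : ‖S‖ ≤ Real.sqrt d⁻¹ := by
    apply opNorm_le_bound _ (Real.sqrt_nonneg _)
    intro x
    have h1 := step2 x
    have h2 : ‖S x‖ ^ 2 ≤ d⁻¹ * ‖x‖ ^ 2 := by
      rw [← mul_le_mul_iff_right₀ hdpos]
      calc d * ‖S x‖ ^ 2 ≤ ‖x‖ ^ 2 := h1
      _ = d * (d⁻¹ * ‖x‖ ^ 2) := by field_simp
    have h := Real.sqrt_le_sqrt h2
    rwa [Real.sqrt_sq (norm_nonneg _), Real.sqrt_mul (by positivity) (‖x‖ ^ 2),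
      Real.sqrt_sq (norm_nonneg _)] at h
  have hS2le : ‖S‖ ^ 2 ≤ d⁻¹ := by
    have := pow_le_pow_left₀ (le_of_lt hSpos) hSle 2
    rwa [Real.sq_sqrt (by positivity)] at this
  have hge : 1 - (‖S‖ ^ 2)⁻¹ ≤ c ^ 2 := by
    have hdinvpos : (0:ℝ) < d⁻¹ := by positivity
    have : d ≤ (‖S‖ ^ 2)⁻¹ := by
      rw [← inv_inv d]
      exact inv_anti₀ hS2pos hS2le |>.trans_eq rfl
    simp only [hd] at this
    linarith
  have hc2 : c ^ 2 = 1 - (‖S‖ ^ 2)⁻¹ := le_antisymm hc2le hge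
  calc c = Real.sqrt (c ^ 2) := (Real.sqrt_sq hc0).symm
  _ = Real.sqrt (1 - (‖S‖ ^ 2)⁻¹) := by rw [hc2]

end key


section diff
variable {H : Type*} [NormedAddCommGroup H] [InnerProductSpace ℝ H] [CompleteSpace H]

local notation "⟪" x ", " y "⟫" => @inner ℝ _ _ x y

set_option linter.unusedSectionVars false

lemma orthProj_adjoint (K : Submodule ℝ H) [HasOrthogonalProjection K] :
    ContinuousLinearMap.adjoint (orthProj K) = orthProj K :=
  ((eq_adjoint_iff (orthProj K) (orthProj K)).mpr (orthProj_inner K)).symm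

lemma norm_orthProj_comp_comm (K L : Submodule ℝ H) [HasOrthogonalProjection K]
    [HasOrthogonalProjection L] :
    ‖(orthProj K).comp (orthProj L)‖ = ‖(orthProj L).comp (orthProj K)‖ := by
  conv_lhs => rw [← norm_adjoint ((orthProj K).comp (orthProj L))]
  rw [adjoint_comp, orthProj_adjoint, orthProj_adjoint]

lemma orthProj_pythagoras (K : Submodule ℝ H) [HasOrthogonalProjection K] (x : H) :
    ‖orthProj K x‖ ^ 2 + ‖x - orthProj K x‖ ^ 2 = ‖x‖ ^ 2 := by
  have h0 : ⟪orthProj K x, x - orthProj K x⟫ = 0 := by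
    rw [inner_sub_right, inner_orthProj_self, real_inner_self_eq_norm_sq, sub_self]
  have hx : x = orthProj K x + (x - orthProj K x) := by abel
  calc ‖orthProj K x‖ ^ 2 + ‖x - orthProj K x‖ ^ 2
      = ‖orthProj K x‖ ^ 2 + 2 * ⟪orthProj K x, x - orthProj K x⟫
        + ‖x - orthProj K x‖ ^ 2 := by rw [h0]; ring
  _ = ‖orthProj K x + (x - orthProj K x)‖ ^ 2 := (norm_add_sq_real _ _).symm
  _ = ‖x‖ ^ 2 := by rw [← hx]

lemma diff_sq_identity (K L : Submodule ℝ H) [HasOrthogonalProjection K]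
    [HasOrthogonalProjection L] (x : H) :
    ‖(orthProj K - orthProj L) x‖ ^ 2
      = ‖orthProj Lᗮ (orthProj K x)‖ ^ 2 + ‖orthProj L (x - orthProj K x)‖ ^ 2 := by
  have hD : (orthProj K - orthProj L) x = orthProj K x - orthProj L x := rfl
  have ht1 : ‖orthProj Lᗮ (orthProj K x)‖ ^ 2
      = ‖orthProj K x‖ ^ 2 - ‖orthProj L (orthProj K x)‖ ^ 2 := by
    rw [orthProj_orthogonal, @norm_sub_sq_real,
      real_inner_comm (orthProj L (orthProj K x)) (orthProj K x), inner_orthProj_self]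
    ring
  have ht2 : ‖orthProj L (x - orthProj K x)‖ ^ 2
      = ‖orthProj L x‖ ^ 2 - 2 * ⟪orthProj K x, orthProj L x⟫
        + ‖orthProj L (orthProj K x)‖ ^ 2 := by
    rw [← inner_orthProj_self, map_sub, inner_sub_left, inner_sub_right, inner_sub_right]
    have e1 : ⟪orthProj L x, x⟫ = ‖orthProj L x‖ ^ 2 := inner_orthProj_self L x
    have e2 : ⟪orthProj L (orthProj K x), orthProj K x⟫ = ‖orthProj L (orthProj K x)‖ ^ 2 :=
      inner_orthProj_self L (orthProj K x)
    have e3 : ⟪orthProj L (orthProj K x), x⟫ = ⟪orthProj K x, orthProj L x⟫ :=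
      orthProj_inner L (orthProj K x) x
    have e4 : ⟪orthProj L x, orthProj K x⟫ = ⟪orthProj K x, orthProj L x⟫ :=
      real_inner_comm _ _
    rw [e1, e2, e3, e4]
    ring
  rw [hD, @norm_sub_sq_real, ht1, ht2]
  ring

lemma norm_diff_eq_max (K L : Submodule ℝ H) [HasOrthogonalProjection K]
    [HasOrthogonalProjection L] :
    ‖orthProj K - orthProj L‖
      = max ‖(orthProj Lᗮ).comp (orthProj K)‖ ‖(orthProj L).comp (orthProj Kᗮ)‖ := by
  have ha0 : (0:ℝ) ≤ ‖(orthProj Lᗮ).comp (orthProj K)‖ := norm_nonneg _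
  have hb0 : (0:ℝ) ≤ ‖(orthProj L).comp (orthProj Kᗮ)‖ := norm_nonneg _
  set a := ‖(orthProj Lᗮ).comp (orthProj K)‖
  set b := ‖(orthProj L).comp (orthProj Kᗮ)‖
  have hm0 : (0:ℝ) ≤ max a b := le_max_of_le_left ha0
  apply le_antisymm
  · apply opNorm_le_bound _ hm0
    intro x
    have hid := diff_sq_identity K L x
    have h1 : ‖orthProj Lᗮ (orthProj K x)‖ ≤ a * ‖orthProj K x‖ := by
      calc ‖orthProj Lᗮ (orthProj K x)‖
          = ‖((orthProj Lᗮ).comp (orthProj K)) (orthProj K x)‖ := by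
            rw [comp_apply, orthProj_idem]
      _ ≤ a * ‖orthProj K x‖ := le_opNorm _ _
    have h2 : ‖orthProj L (x - orthProj K x)‖ ≤ b * ‖x - orthProj K x‖ := by
      have e : x - orthProj K x = orthProj Kᗮ x := (orthProj_orthogonal K x).symm
      calc ‖orthProj L (x - orthProj K x)‖
          = ‖((orthProj L).comp (orthProj Kᗮ)) (x - orthProj K x)‖ := by
            rw [comp_apply, e, orthProj_idem]
      _ ≤ b * ‖x - orthProj K x‖ := le_opNorm _ _
    have hpy := orthProj_pythagoras K x
    have h1' := pow_le_pow_left₀ (norm_nonneg _) h1 2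
    have h2' := pow_le_pow_left₀ (norm_nonneg _) h2 2
    have ha2 : a ^ 2 ≤ (max a b) ^ 2 := pow_le_pow_left₀ ha0 (le_max_left a b) 2
    have hb2 : b ^ 2 ≤ (max a b) ^ 2 := pow_le_pow_left₀ hb0 (le_max_right a b) 2
    have hsq : ‖(orthProj K - orthProj L) x‖ ^ 2 ≤ ((max a b) * ‖x‖) ^ 2 := by
      nlinarith [mul_le_mul_of_nonneg_right ha2 (sq_nonneg ‖orthProj K x‖),
        mul_le_mul_of_nonneg_right hb2 (sq_nonneg ‖x - orthProj K x‖),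
        sq_nonneg ‖orthProj K x‖, sq_nonneg ‖x - orthProj K x‖]
    exact (abs_le_of_sq_le_sq' hsq (by positivity)).2
  · apply max_le
    · apply opNorm_le_bound _ (norm_nonneg _)
      intro x
      have hid := diff_sq_identity K L x
      rw [comp_apply]
      have hsq : ‖orthProj Lᗮ (orthProj K x)‖ ^ 2
          ≤ (‖orthProj K - orthProj L‖ * ‖x‖) ^ 2 := by
        have h := pow_le_pow_left₀ (norm_nonneg _) ((orthProj K - orthProj L).le_opNorm x) 2
        nlinarith [sq_nonneg ‖orthProj L (x - orthProj K x)‖]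
      exact (abs_le_of_sq_le_sq' hsq (by positivity)).2
    · apply opNorm_le_bound _ (norm_nonneg _)
      intro x
      have hid := diff_sq_identity K L x
      rw [comp_apply, orthProj_orthogonal]
      have hsq : ‖orthProj L (x - orthProj K x)‖ ^ 2
          ≤ (‖orthProj K - orthProj L‖ * ‖x‖) ^ 2 := by
        have h := pow_le_pow_left₀ (norm_nonneg _) ((orthProj K - orthProj L).le_opNorm x) 2
        nlinarith [sq_nonneg ‖orthProj Lᗮ (orthProj K x)‖]
      exact (abs_le_of_sq_le_sq' hsq (by positivity)).2

end diff

/-- For a bounded idempotent `S` on a Hilbert space: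
`‖P_{R(S)} − P_{R(S*)}‖ = ‖P_{R(S)}P_{N(S)}‖ = ‖P_{N(S)}P_{R(S)}‖`, and this value is
`√(1 − ‖S‖⁻²)` when `S ≠ 0` and `0` when `S = 0`. -/
theorem stmt14 {H : Type*} [NormedAddCommGroup H] [InnerProductSpace ℝ H] [CompleteSpace H]
    (S : H →L[ℝ] H) (hS : S.comp S = S) :
    ‖orthProj (LinearMap.range (S : H →ₗ[ℝ] H)) - orthProj (LinearMap.range (ContinuousLinearMap.adjoint S : H →ₗ[ℝ] H))‖
      = ‖(orthProj (LinearMap.range (S : H →ₗ[ℝ] H))).comp (orthProj (LinearMap.ker (S : H →ₗ[ℝ] H)))‖ ∧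
    ‖(orthProj (LinearMap.range (S : H →ₗ[ℝ] H))).comp (orthProj (LinearMap.ker (S : H →ₗ[ℝ] H)))‖
      = ‖(orthProj (LinearMap.ker (S : H →ₗ[ℝ] H))).comp (orthProj (LinearMap.range (S : H →ₗ[ℝ] H)))‖ ∧
    (S ≠ 0 → ‖(orthProj (LinearMap.ker (S : H →ₗ[ℝ] H))).comp (orthProj (LinearMap.range (S : H →ₗ[ℝ] H)))‖
      = Real.sqrt (1 - (‖S‖ ^ 2)⁻¹)) ∧
    (S = 0 → ‖(orthProj (LinearMap.ker (S : H →ₗ[ℝ] H))).comp (orthProj (LinearMap.range (S : H →ₗ[ℝ] H)))‖ = 0) := by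
  by_cases h0 : S = 0
  · subst h0
    have hbot : LinearMap.range ((0 : H →L[ℝ] H) : H →ₗ[ℝ] H) = ⊥ := by
      ext x; simp [LinearMap.mem_range, eq_comm]
    have hadj : ContinuousLinearMap.adjoint (0 : H →L[ℝ] H) = 0 := map_zero _
    have hP0 : orthProj (⊥ : Submodule ℝ H) = 0 := by
      rw [orthProj_of_has]
      ext x
      simp [orthogonalProjection_bot]
    rw [hadj, hbot, hP0]
    simp
  · haveI hR := hasOrthProj_range S hS
    haveI hRa := hasOrthProj_range (ContinuousLinearMap.adjoint S) (adjoint_idem S hS)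
    have e1 : LinearMap.ker (S : H →ₗ[ℝ] H) = (LinearMap.range (ContinuousLinearMap.adjoint S : H →ₗ[ℝ] H))ᗮ :=
      ker_eq_orthogonal_range_adjoint S
    have e3 : LinearMap.ker (ContinuousLinearMap.adjoint S : H →ₗ[ℝ] H) = (LinearMap.range (S : H →ₗ[ℝ] H))ᗮ := by
      rw [ker_eq_orthogonal_range_adjoint (ContinuousLinearMap.adjoint S), adjoint_adjoint]
    have c := key S hS h0
    have hadj_ne : ContinuousLinearMap.adjoint S ≠ 0 := by
      intro h
      exact h0 (by rw [← adjoint_adjoint (A := S), h, map_zero])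
    have c' := key (ContinuousLinearMap.adjoint S) (adjoint_idem S hS) hadj_ne
    rw [norm_adjoint] at c'
    have hmax := norm_diff_eq_max (LinearMap.range (S : H →ₗ[ℝ] H))
      (LinearMap.range (ContinuousLinearMap.adjoint S : H →ₗ[ℝ] H))
    rw [← e1, ← e3] at hmax
    have hb : ‖(orthProj (LinearMap.range (ContinuousLinearMap.adjoint S : H →ₗ[ℝ] H))).comp
        (orthProj (LinearMap.ker (ContinuousLinearMap.adjoint S : H →ₗ[ℝ] H)))‖
        = Real.sqrt (1 - (‖S‖ ^ 2)⁻¹) := by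
      rw [norm_orthProj_comp_comm]; exact c'
    have hPQ : ‖(orthProj (LinearMap.range (S : H →ₗ[ℝ] H))).comp (orthProj (LinearMap.ker (S : H →ₗ[ℝ] H)))‖
        = ‖(orthProj (LinearMap.ker (S : H →ₗ[ℝ] H))).comp (orthProj (LinearMap.range (S : H →ₗ[ℝ] H)))‖ :=
      norm_orthProj_comp_comm _ _
    refine ⟨?_, hPQ, fun _ => c, fun h => absurd h h0⟩
    rw [hmax, hb, hPQ, c, max_self]
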